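/- In the one-dimensional case, the subspace of even, radially non-increasing functions of W^{1,2}(ℝ) embeds compactly into L^q(ℝ) for every 2 < q < ∞: every sequence bounded in W^{1,2}(ℝ) consisting of even functions non-increasing in |x| has a subsequence converging strongly in L^q(ℝ). -/

import Mathlib

open MeasureTheory Filter Set
open scoped ENNReal NNReal Topology


-- nonnegativity
lemma rdce_nonneg (f : ℝ → ℝ) (heven : ∀ x : ℝ, f (-x) = f x)
    (hmono : ∀ x y : ℝ, 0 ≤ x → x ≤ y → f y ≤ f x)
    (hmem : MemLp f 2 (volume : Measure ℝ)) : ∀ x, 0 ≤ f x := by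
  have key : ∀ x : ℝ, 0 ≤ x → 0 ≤ f x := by
    intro x hx
    by_contra hc
    push_neg at hc
    have hle : eLpNorm (fun _ : ℝ => f x) 2 (volume.restrict (Ici x)) ≤
        eLpNorm f 2 (volume.restrict (Ici x)) := by
      apply eLpNorm_mono_ae
      filter_upwards [ae_restrict_mem measurableSet_Ici] with y hy
      have h1 : f y ≤ f x := hmono x y hx hy
      rw [Real.norm_eq_abs, Real.norm_eq_abs, abs_of_neg hc, abs_of_neg (lt_of_le_of_lt h1 hc)]
      linarith
    have hconst : eLpNorm (fun _ : ℝ => f x) 2 (volume.restrict (Ici x)) = ⊤ := by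
      rw [eLpNorm_const' _ (by norm_num) (by norm_num)]
      simp [Measure.restrict_apply, Real.volume_Ici]
      rw [ENNReal.mul_top]
      simpa using hc.ne
    have hfin : eLpNorm f 2 (volume.restrict (Ici x)) < ⊤ :=
      lt_of_le_of_lt (eLpNorm_mono_measure f Measure.restrict_le_self) hmem.2
    rw [hconst] at hle
    exact absurd (top_le_iff.mp hle) hfin.ne
  intro x
  rcases le_total 0 x with h | h
  · exact key x h
  · rw [← heven]; exact key (-x) (by linarith)

lemma rdce_decay (f : ℝ → ℝ) (M : ℝ) (hM : 0 ≤ M)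
    (hmono : ∀ x y : ℝ, 0 ≤ x → x ≤ y → f y ≤ f x)
    (hnn : ∀ x, 0 ≤ f x)
    (hbd : eLpNorm f 2 (volume : Measure ℝ) ≤ ENNReal.ofReal M) :
    ∀ x : ℝ, 0 < x → f x * Real.sqrt x ≤ M := by
  intro x hx
  have hle : eLpNorm (fun _ : ℝ => f x) 2 (volume.restrict (Ioc 0 x)) ≤
      eLpNorm f 2 (volume.restrict (Ioc 0 x)) := by
    apply eLpNorm_mono_ae
    filter_upwards [ae_restrict_mem measurableSet_Ioc] with y hy
    rw [Real.norm_eq_abs, Real.norm_eq_abs, abs_of_nonneg (hnn x), abs_of_nonneg (hnn y)]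
    exact hmono y x hy.1.le hy.2
  have hconst : eLpNorm (fun _ : ℝ => f x) 2 (volume.restrict (Ioc 0 x)) =
      ENNReal.ofReal (f x) * ENNReal.ofReal x ^ ((1:ℝ)/2) := by
    rw [eLpNorm_const' _ (by norm_num) (by norm_num)]
    congr 1
    · rw [Real.enorm_eq_ofReal (hnn x)]
    · rw [Measure.restrict_apply_univ, Real.volume_Ioc]
      norm_num
  have h2 : ENNReal.ofReal (f x) * ENNReal.ofReal x ^ ((1:ℝ)/2) ≤ ENNReal.ofReal M := by
    rw [← hconst]
    exact hle.trans ((eLpNorm_mono_measure f Measure.restrict_le_self).trans hbd)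
  have h3 : ENNReal.ofReal x ^ ((1:ℝ)/2) = ENNReal.ofReal (Real.sqrt x) := by
    rw [ENNReal.ofReal_rpow_of_pos hx, Real.sqrt_eq_rpow]
  rw [h3, ← ENNReal.ofReal_mul (hnn x)] at h2
  exact (ENNReal.ofReal_le_ofReal_iff hM).mp h2

lemma rdce_finrestrict (a b : ℝ) : IsFiniteMeasure ((volume : Measure ℝ).restrict (Ioc a b)) :=
  ⟨by rw [Measure.restrict_apply_univ, Real.volume_Ioc]; exact ENNReal.ofReal_lt_top⟩

lemma rdce_holder (f : ℝ → ℝ) (M : ℝ) (hM : 0 ≤ M)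
    (hdiff : Differentiable ℝ f)
    (hmem' : MemLp (deriv f) 2 (volume : Measure ℝ))
    (hbd : eLpNorm (deriv f) 2 (volume : Measure ℝ) ≤ ENNReal.ofReal M) :
    ∀ a b : ℝ, a ≤ b → |f b - f a| ≤ M * Real.sqrt (b - a) := by
  intro a b hab
  haveI := rdce_finrestrict a b
  have hmemr : MemLp (deriv f) 2 ((volume : Measure ℝ).restrict (Ioc a b)) :=
    hmem'.restrict _
  have hint : IntegrableOn (deriv f) (Ioc a b) volume :=
    memLp_one_iff_integrable.mp (hmemr.mono_exponent (by norm_num))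
  have hii : IntervalIntegrable (deriv f) volume a b :=
    (intervalIntegrable_iff_integrableOn_Ioc_of_le hab).mpr hint
  have hftc : ∫ y in a..b, deriv f y = f b - f a :=
    intervalIntegral.integral_deriv_eq_sub (fun x _ => hdiff x) hii
  have h1 : |f b - f a| ≤ ∫ y in Ioc a b, ‖deriv f y‖ := by
    rw [← hftc]
    calc |∫ y in a..b, deriv f y| = ‖∫ y in a..b, deriv f y‖ := (Real.norm_eq_abs _).symm
    _ ≤ ∫ y in a..b, ‖deriv f y‖ := intervalIntegral.norm_integral_le_integral_norm hab
    _ = ∫ y in Ioc a b, ‖deriv f y‖ := intervalIntegral.integral_of_le hab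
  have h2 : ENNReal.ofReal (∫ y in Ioc a b, ‖deriv f y‖) =
      eLpNorm (deriv f) 1 ((volume : Measure ℝ).restrict (Ioc a b)) := by
    rw [ofReal_integral_norm_eq_lintegral_enorm hint, eLpNorm_one_eq_lintegral_enorm]
  have h3 : eLpNorm (deriv f) 1 ((volume : Measure ℝ).restrict (Ioc a b)) ≤
      ENNReal.ofReal M * ENNReal.ofReal (Real.sqrt (b - a)) := by
    calc eLpNorm (deriv f) 1 ((volume : Measure ℝ).restrict (Ioc a b))
        ≤ eLpNorm (deriv f) 2 ((volume : Measure ℝ).restrict (Ioc a b)) *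
          ((volume : Measure ℝ).restrict (Ioc a b)) univ ^ ((1:ℝ)/(1:ℝ≥0∞).toReal - 1/(2:ℝ≥0∞).toReal) :=
        eLpNorm_le_eLpNorm_mul_rpow_measure_univ (by norm_num) hmemr.1
    _ ≤ ENNReal.ofReal M * ENNReal.ofReal (Real.sqrt (b - a)) := by
        apply mul_le_mul'
        · exact (eLpNorm_mono_measure _ Measure.restrict_le_self).trans hbd
        · rw [Measure.restrict_apply_univ, Real.volume_Ioc]
          have : (1:ℝ)/(1:ℝ≥0∞).toReal - 1/(2:ℝ≥0∞).toReal = (1:ℝ)/2 := by norm_num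
          rw [this]
          rcases le_or_gt (b - a) 0 with h | h
          · simp [ENNReal.ofReal_of_nonpos h, ENNReal.zero_rpow_of_pos]
          · rw [ENNReal.ofReal_rpow_of_pos h, Real.sqrt_eq_rpow]
  have h4 : ENNReal.ofReal |f b - f a| ≤ ENNReal.ofReal (M * Real.sqrt (b - a)) := by
    calc ENNReal.ofReal |f b - f a| ≤ ENNReal.ofReal (∫ y in Ioc a b, ‖deriv f y‖) :=
        ENNReal.ofReal_le_ofReal h1
    _ ≤ ENNReal.ofReal M * ENNReal.ofReal (Real.sqrt (b - a)) := h2 ▸ h3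
    _ = ENNReal.ofReal (M * Real.sqrt (b - a)) := (ENNReal.ofReal_mul hM).symm
  have := (ENNReal.ofReal_le_ofReal_iff (by positivity)).mp h4
  linarith [abs_nonneg (f b - f a), this]

lemma rdce_selection (u : ℕ → ℝ → ℝ) (B M : ℝ) (hM : 0 ≤ M)
    (hB : ∀ n x, |u n x| ≤ B)
    (hH : ∀ n, ∀ a b : ℝ, a ≤ b → |u n b - u n a| ≤ M * Real.sqrt (b - a)) :
    ∃ φ : ℕ → ℕ, StrictMono φ ∧
      ∀ x : ℝ, ∃ L : ℝ, Tendsto (fun k => u (φ k) x) atTop (𝓝 L) := by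
  have hs : IsCompact (univ.pi fun _ : ℚ => Icc (-B) B) :=
    isCompact_univ_pi fun _ => isCompact_Icc
  have hF : ∀ n, (fun r : ℚ => u n (r : ℝ)) ∈ univ.pi fun _ : ℚ => Icc (-B) B := by
    intro n
    rw [mem_univ_pi]
    intro r
    exact abs_le.mp (hB n r)
  obtain ⟨a, -, φ, hφ, hconv⟩ := hs.tendsto_subseq hF
  rw [tendsto_pi_nhds] at hconv
  refine ⟨φ, hφ, fun x => ?_⟩
  have hcauchy : CauchySeq (fun k => u (φ k) x) := by
    rw [Metric.cauchySeq_iff]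
    intro ε hε
    -- choose δ with M * √δ < ε / 3
    set δ : ℝ := min 1 ((ε / (3 * (M + 1))) ^ 2) with hδdef
    have hδpos : 0 < δ := by
      apply lt_min one_pos
      positivity
    have hδsmall : M * Real.sqrt δ < ε / 3 := by
      have h1 : Real.sqrt δ ≤ ε / (3 * (M + 1)) := by
        have : δ ≤ (ε / (3 * (M + 1))) ^ 2 := min_le_right _ _
        calc Real.sqrt δ ≤ Real.sqrt ((ε / (3 * (M + 1))) ^ 2) := Real.sqrt_le_sqrt this
        _ = ε / (3 * (M + 1)) := Real.sqrt_sq (by positivity)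
      calc M * Real.sqrt δ ≤ M * (ε / (3 * (M + 1))) := by
            apply mul_le_mul_of_nonneg_left h1 hM
      _ < ε / 3 := by
            rw [mul_div_assoc', div_lt_div_iff₀ (by positivity) (by norm_num)]
            nlinarith [hε]
    obtain ⟨r, hr1, hr2⟩ := exists_rat_btwn (show x < x + δ by linarith)
    have hdistr : ∀ k, |u (φ k) (r : ℝ) - u (φ k) x| < ε / 3 := by
      intro k
      calc |u (φ k) (r : ℝ) - u (φ k) x| ≤ M * Real.sqrt ((r : ℝ) - x) :=
          hH (φ k) x r hr1.le
      _ ≤ M * Real.sqrt δ := by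
          apply mul_le_mul_of_nonneg_left _ hM
          apply Real.sqrt_le_sqrt
          linarith
      _ < ε / 3 := hδsmall
    have hcr : CauchySeq (fun k => u (φ k) (r : ℝ)) := (hconv r).cauchySeq
    rw [Metric.cauchySeq_iff] at hcr
    obtain ⟨N, hN⟩ := hcr (ε / 3) (by linarith)
    refine ⟨N, fun m hm n hn => ?_⟩
    have h1 := hdistr m
    have h2 := hdistr n
    have h3 := hN m hm n hn
    rw [Real.dist_eq] at h3 ⊢
    have : u (φ m) x - u (φ n) x =
        -(u (φ m) (r : ℝ) - u (φ m) x) + (u (φ m) (r : ℝ) - u (φ n) (r : ℝ)) +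
        (u (φ n) (r : ℝ) - u (φ n) x) := by ring
    rw [this]
    calc |_ + _ + _| ≤ |(-(u (φ m) (r : ℝ) - u (φ m) x) + (u (φ m) (r : ℝ) - u (φ n) (r : ℝ)))| +
        |u (φ n) (r : ℝ) - u (φ n) x| := abs_add_le _ _
    _ ≤ |(-(u (φ m) (r : ℝ) - u (φ m) x))| + |u (φ m) (r : ℝ) - u (φ n) (r : ℝ)| +
        |u (φ n) (r : ℝ) - u (φ n) x| := by gcongr; exact abs_add_le _ _
    _ < ε / 3 + ε / 3 + ε / 3 := by rw [abs_neg]; gcongr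
    _ = ε := by ring
  exact cauchySeq_tendsto_of_complete hcauchy

lemma rdce_meas_g (B M : ℝ) : Measurable (fun x : ℝ => min B (M / Real.sqrt |x|)) := by
  apply Measurable.min measurable_const
  exact measurable_const.div ((Real.continuous_sqrt.comp continuous_abs).measurable)

lemma rdce_g_nonneg (B M : ℝ) (hB : 0 ≤ B) (hM : 0 ≤ M) (x : ℝ) :
    0 ≤ min B (M / Real.sqrt |x|) :=
  le_min hB (div_nonneg hM (Real.sqrt_nonneg _))

lemma rdce_integrableOn_Ioi (q B M : ℝ) (hq : 2 < q) (hB : 0 ≤ B) (hM : 0 ≤ M) :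
    IntegrableOn (fun x : ℝ => (2 * min B (M / Real.sqrt |x|)) ^ q) (Ioi 0) volume := by
  have hq0 : (0:ℝ) < q := by linarith
  have hmeas : Measurable (fun x : ℝ => (2 * min B (M / Real.sqrt |x|)) ^ q) :=
    (Real.continuous_rpow_const hq0.le).measurable.comp ((rdce_meas_g B M).const_mul 2)
  have h01 : IntegrableOn (fun x : ℝ => (2 * min B (M / Real.sqrt |x|)) ^ q) (Ioc 0 1) volume := by
    apply Integrable.mono' (integrableOn_const (by simp [Real.volume_Ioc]) :
      IntegrableOn (fun _ : ℝ => (2 * B) ^ q) (Ioc 0 1) volume)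
    · exact hmeas.aestronglyMeasurable.restrict
    · filter_upwards with x
      rw [Real.norm_eq_abs, abs_of_nonneg (Real.rpow_nonneg (by positivity) q)]
      apply Real.rpow_le_rpow (by positivity) _ hq0.le
      have := min_le_left B (M / Real.sqrt |x|)
      linarith
  have h1i : IntegrableOn (fun x : ℝ => (2 * min B (M / Real.sqrt |x|)) ^ q) (Ioi 1) volume := by
    have hint : IntegrableOn (fun x : ℝ => (2 * M) ^ q * x ^ (-(q / 2))) (Ioi 1) volume :=
      (integrableOn_Ioi_rpow_of_lt (by linarith) one_pos).const_mul _
    apply Integrable.mono' hint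
    · exact hmeas.aestronglyMeasurable.restrict
    · filter_upwards [ae_restrict_mem measurableSet_Ioi] with x hx
      have hx1 : (1:ℝ) ≤ x := le_of_lt hx
      have hx0 : (0:ℝ) < x := lt_of_lt_of_le one_pos hx1
      rw [Real.norm_eq_abs, abs_of_nonneg (Real.rpow_nonneg (by positivity) q)]
      have habs : |x| = x := abs_of_pos hx0
      have hkey : (2 * min B (M / Real.sqrt |x|)) ^ q ≤ (2 * (M / Real.sqrt x)) ^ q := by
        apply Real.rpow_le_rpow (by positivity) _ hq0.le
        rw [habs]
        have := min_le_right B (M / Real.sqrt x)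
        linarith
      refine hkey.trans (le_of_eq ?_)
      rw [mul_div_assoc' 2 M, Real.div_rpow (by positivity) (Real.sqrt_nonneg x),
        Real.sqrt_eq_rpow, ← Real.rpow_mul hx0.le, div_eq_mul_inv, ← Real.rpow_neg hx0.le]
      congr 1
      ring_nf
  rw [← Ioc_union_Ioi_eq_Ioi (le_of_lt one_pos)]
  exact h01.union h1i

lemma rdce_integrable (q B M : ℝ) (hq : 2 < q) (hB : 0 ≤ B) (hM : 0 ≤ M) :
    Integrable (fun x : ℝ => (2 * min B (M / Real.sqrt |x|)) ^ q) (volume : Measure ℝ) := by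
  have hIoi := rdce_integrableOn_Ioi q B M hq hB hM
  have hIci : IntegrableOn (fun x : ℝ => (2 * min B (M / Real.sqrt |x|)) ^ q) (Ici 0) volume :=
    (integrableOn_Ici_iff_integrableOn_Ioi (by simp)).mpr hIoi
  rw [← integrableOn_univ, ← @Iic_union_Ioi _ _ (0 : ℝ), integrableOn_union]
  refine ⟨?_, hIoi⟩
  have := ((Measure.measurePreserving_neg (volume : Measure ℝ)).integrableOn_comp_preimage
      (Homeomorph.neg ℝ).measurableEmbedding).mpr hIci
  simpa [Function.comp_def, neg_preimage, neg_Ici, neg_zero, abs_neg] using this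

lemma rdce_tendsto (q : ℝ) (hq : 2 < q) (w : ℕ → ℝ → ℝ) (v : ℝ → ℝ) (B M : ℝ)
    (hB : 0 ≤ B) (hM : 0 ≤ M)
    (hmw : ∀ k, AEStronglyMeasurable (w k) (volume : Measure ℝ))
    (hmv : AEStronglyMeasurable v (volume : Measure ℝ))
    (hbd : ∀ k, ∀ x : ℝ, x ≠ 0 → |w k x - v x| ≤ 2 * min B (M / Real.sqrt |x|))
    (hconv : ∀ x : ℝ, Tendsto (fun k => w k x) atTop (𝓝 (v x))) :
    Tendsto (fun k => eLpNorm (w k - v) (ENNReal.ofReal q) volume) atTop (𝓝 0) := by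
  have hq0 : (0:ℝ) < q := by linarith
  have hp0 : ENNReal.ofReal q ≠ 0 := by simp [ENNReal.ofReal_eq_zero]; linarith
  have hptop : ENNReal.ofReal q ≠ ∞ := ENNReal.ofReal_ne_top
  have htr : (ENNReal.ofReal q).toReal = q := ENNReal.toReal_ofReal hq0.le
  have heq : ∀ k, eLpNorm (w k - v) (ENNReal.ofReal q) volume =
      (∫⁻ x, (‖w k x - v x‖₊ : ℝ≥0∞) ^ q) ^ (1/q) := by
    intro k
    rw [eLpNorm_eq_lintegral_rpow_enorm_toReal hp0 hptop, htr]
    rfl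
  have h0ae : ∀ᵐ x : ℝ, x ≠ (0:ℝ) := by
    rw [ae_iff]
    simpa using Real.volume_singleton (a := (0:ℝ))
  have hlin : Tendsto (fun k => ∫⁻ x, (‖w k x - v x‖₊ : ℝ≥0∞) ^ q) atTop (𝓝 0) := by
    have h0 : (0:ℝ≥0∞) = ∫⁻ _ : ℝ, 0 ∂volume := by simp
    rw [h0]
    apply tendsto_lintegral_of_dominated_convergence'
      (fun x => ENNReal.ofReal ((2 * min B (M / Real.sqrt |x|)) ^ q))
    · intro k
      exact (ENNReal.continuous_rpow_const.measurable).comp_aemeasurable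
        ((hmw k).sub hmv).aemeasurable.enorm
    · intro k
      filter_upwards [h0ae] with x hx
      rw [← enorm_eq_nnnorm, Real.enorm_eq_ofReal_abs, ENNReal.ofReal_rpow_of_nonneg (abs_nonneg _) hq0.le]
      exact ENNReal.ofReal_le_ofReal
        (Real.rpow_le_rpow (abs_nonneg _) (hbd k x hx) hq0.le)
    · -- finiteness
      have hint := rdce_integrable q B M hq hB hM
      have hfin := hint.hasFiniteIntegral
      rw [HasFiniteIntegral] at hfin
      apply ne_of_lt
      calc ∫⁻ x, ENNReal.ofReal ((2 * min B (M / Real.sqrt |x|)) ^ q) ∂volume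
          ≤ ∫⁻ x, (‖(2 * min B (M / Real.sqrt |x|)) ^ q‖₊ : ℝ≥0∞) ∂volume :=
            lintegral_mono fun x => Real.ofReal_le_enorm _
      _ < ∞ := hfin
    · filter_upwards with x
      have habs : Tendsto (fun k => |w k x - v x|) atTop (𝓝 0) := by
        have h1 : Tendsto (fun k => w k x - v x) atTop (𝓝 (v x - v x)) :=
          (hconv x).sub_const (v x)
        rw [sub_self] at h1
        simpa using h1.abs
      have h2 : Tendsto (fun k => ENNReal.ofReal (|w k x - v x| ^ q)) atTop (𝓝 0) := by
        have h3 : Tendsto (fun k => |w k x - v x| ^ q) atTop (𝓝 0) := by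
          have := ((Real.continuous_rpow_const hq0.le).tendsto 0).comp habs
          simpa [Real.zero_rpow hq0.ne', Function.comp_def] using this
        have := (ENNReal.continuous_ofReal.tendsto 0).comp h3
        simpa [Function.comp_def] using this
      refine Tendsto.congr (fun k => ?_) h2
      rw [← enorm_eq_nnnorm, Real.enorm_eq_ofReal_abs, ENNReal.ofReal_rpow_of_nonneg (abs_nonneg _) hq0.le]
  have hfinal : Tendsto (fun k => (∫⁻ x, (‖w k x - v x‖₊ : ℝ≥0∞) ^ q) ^ (1/q)) atTop (𝓝 0) := by
    have hcmp := (ENNReal.continuous_rpow_const (y := 1/q)).tendsto 0 |>.comp hlin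
    have h00 : (0:ℝ≥0∞) ^ ((1:ℝ)/q) = 0 := ENNReal.zero_rpow_of_pos (by positivity)
    rw [← h00]
    exact hcmp
  refine Tendsto.congr (fun k => ?_) hfinal
  exact (heq k).symm
/-- Compact embedding of even, radially non-increasing functions of `W^{1,2}(ℝ)`
into `L^q(ℝ)`, `2 < q < ∞`: any bounded sequence of such functions has a
subsequence converging strongly in `L^q(ℝ)`. -/
theorem radial_decreasing_compact_embedding
    (q : ℝ) (hq : 2 < q)
    (u : ℕ → ℝ → ℝ) (M : ℝ)
    (heven : ∀ n, ∀ x : ℝ, u n (-x) = u n x)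
    (hmono : ∀ n, ∀ x y : ℝ, 0 ≤ x → x ≤ y → u n y ≤ u n x)
    (hdiff : ∀ n, Differentiable ℝ (u n))
    (hmem : ∀ n, MemLp (u n) 2 (volume : Measure ℝ))
    (hmem' : ∀ n, MemLp (deriv (u n)) 2 (volume : Measure ℝ))
    (hbdd : ∀ n, eLpNorm (u n) 2 (volume : Measure ℝ) ≤ ENNReal.ofReal M ∧
      eLpNorm (deriv (u n)) 2 (volume : Measure ℝ) ≤ ENNReal.ofReal M) :
    ∃ (φ : ℕ → ℕ) (v : ℝ → ℝ), StrictMono φ ∧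
      Tendsto (fun k => eLpNorm (u (φ k) - v) (ENNReal.ofReal q) volume)
        atTop (nhds 0) := by
  set M' : ℝ := |M| with hM'def
  have hM' : 0 ≤ M' := abs_nonneg M
  have hb1 : ∀ n, eLpNorm (u n) 2 (volume : Measure ℝ) ≤ ENNReal.ofReal M' :=
    fun n => (hbdd n).1.trans (ENNReal.ofReal_le_ofReal (le_abs_self M))
  have hb2 : ∀ n, eLpNorm (deriv (u n)) 2 (volume : Measure ℝ) ≤ ENNReal.ofReal M' :=
    fun n => (hbdd n).2.trans (ENNReal.ofReal_le_ofReal (le_abs_self M))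
  have hnn : ∀ n, ∀ x : ℝ, 0 ≤ u n x :=
    fun n => rdce_nonneg (u n) (heven n) (hmono n) (hmem n)
  have hdec : ∀ n, ∀ x : ℝ, 0 < x → u n x * Real.sqrt x ≤ M' :=
    fun n => rdce_decay (u n) M' hM' (hmono n) (hnn n) (hb1 n)
  have hhol : ∀ n, ∀ a b : ℝ, a ≤ b → |u n b - u n a| ≤ M' * Real.sqrt (b - a) :=
    fun n => rdce_holder (u n) M' hM' (hdiff n) (hmem' n) (hb2 n)
  -- evenness to |x|
  have habs : ∀ n, ∀ x : ℝ, u n x = u n |x| := by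
    intro n x
    rcases le_or_gt 0 x with h | h
    · rw [abs_of_nonneg h]
    · rw [abs_of_neg h, ← heven n x]
  set B : ℝ := 2 * M' with hBdef
  have hB0 : 0 ≤ B := by positivity
  have hB : ∀ n, ∀ x : ℝ, |u n x| ≤ B := by
    intro n x
    have h1 : u n 1 ≤ M' := by simpa using hdec n 1 one_pos
    have h2 : |u n 1 - u n 0| ≤ M' := by simpa using hhol n 0 1 zero_le_one
    have h3 : u n 0 ≤ B := by
      have := (abs_le.mp h2).1
      rw [hBdef]; linarith
    have h4 : u n x ≤ u n 0 := by
      rw [habs n x]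
      exact hmono n 0 |x| le_rfl (abs_nonneg x)
    rw [abs_of_nonneg (hnn n x)]
    linarith
  -- decay bound away from 0
  have hdec' : ∀ n, ∀ x : ℝ, x ≠ 0 → u n x ≤ M' / Real.sqrt |x| := by
    intro n x hx
    have hx0 : 0 < |x| := abs_pos.mpr hx
    have hs : 0 < Real.sqrt |x| := Real.sqrt_pos.mpr hx0
    rw [habs n x, le_div_iff₀ hs]
    exact hdec n |x| hx0
  obtain ⟨φ, hφ, hptlim⟩ := rdce_selection u B M' hM' hB hhol
  choose v hv using hptlim
  -- bounds on v
  have hvnn : ∀ x : ℝ, 0 ≤ v x :=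
    fun x => ge_of_tendsto (hv x) (Eventually.of_forall fun k => hnn (φ k) x)
  have humin : ∀ n, ∀ x : ℝ, x ≠ 0 → u n x ≤ min B (M' / Real.sqrt |x|) := by
    intro n x hx
    exact le_min ((abs_le.mp (hB n x)).2) (hdec' n x hx)
  have hvmin : ∀ x : ℝ, x ≠ 0 → v x ≤ min B (M' / Real.sqrt |x|) :=
    fun x hx => le_of_tendsto (hv x) (Eventually.of_forall fun k => humin (φ k) x hx)
  have hbd : ∀ k, ∀ x : ℝ, x ≠ 0 →
      |u (φ k) x - v x| ≤ 2 * min B (M' / Real.sqrt |x|) := by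
    intro k x hx
    have h1 := humin (φ k) x hx
    have h2 := hvmin x hx
    have h3 := hnn (φ k) x
    have h4 := hvnn x
    rw [abs_le]
    constructor <;> nlinarith
  -- measurability
  have hmw : ∀ k, AEStronglyMeasurable (u (φ k)) (volume : Measure ℝ) :=
    fun k => ((hdiff (φ k)).continuous).aestronglyMeasurable
  have hlimfun : Tendsto (fun k => u (φ k)) atTop (𝓝 v) := tendsto_pi_nhds.mpr hv
  have hmv : AEStronglyMeasurable v (volume : Measure ℝ) :=
    (stronglyMeasurable_of_tendsto atTop
      (fun k => (hdiff (φ k)).continuous.stronglyMeasurable) hlimfun).aestronglyMeasurable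
  exact ⟨φ, v, hφ, rdce_tendsto q hq (fun k => u (φ k)) v B M' hB0 hM' hmw hmv hbd hv⟩
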